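/- Let (Ω,Σ,μ) be a finite measure space, E₀ and E₁ real normed spaces, and j : E₀ → E₁ an injective continuous linear map. Let φ₀, φ₁ : Σ → (0,∞) be set functions and let T : E₁ → L^1(μ) be a map satisfying: (a) T(j(x₀)) ∈ L^∞(μ) and ‖T(j(x₀))·χ_A‖_{L^∞(μ)} ≤ φ₀(A)·‖x₀‖_{E₀} for every x₀ ∈ E₀ and A ∈ Σ; and (b) ‖(T(x) − T(y))·χ_A‖_{L^1(μ)} ≤ φ₁(A)·‖x − y‖_{E₁} for all x,y ∈ E₁ and A ∈ Σ. Then for every x ∈ E₁, every A ∈ Σ and every t > 0: inf { ‖g₀‖_{L^∞(μ)} + t·‖g₁‖_{L^1(μ)} : g₀ ∈ L^∞(μ), g₁ ∈ L^1(μ), T(x)·χ_A = g₀ + g₁ } ≤ φ₀(A) · inf { ‖x₀‖_{E₀} + t·(φ₁(A)/φ₀(A))·‖x₁‖_{E₁} : x₀ ∈ E₀, x₁ ∈ E₁, x = j(x₀) + x₁ }. -/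

import Mathlib

open MeasureTheory
open scoped ENNReal NNReal

/-- (K-functional estimate for real interpolation of `φ`-Lipschitz maps.)
Let `μ` be a finite measure, `E₀, E₁` normed spaces with an injective continuous linear
embedding `j : E₀ → E₁`, `φ₀, φ₁` positive set functions, and `T : E₁ → L^1(μ)` a map with
(a) `T(j(x₀)) ∈ L^∞(μ)` and `‖T(j(x₀))·χ_A‖_{L^∞} ≤ φ₀(A)·‖x₀‖` for all `x₀ ∈ E₀, A ∈ Σ`;
(b) `‖(T(x)−T(y))·χ_A‖_{L^1} ≤ φ₁(A)·‖x−y‖` for all `x, y ∈ E₁, A ∈ Σ`. Then for every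
`x ∈ E₁`, `A ∈ Σ` and `t > 0`,
`K(t, T(x)·χ_A; L^∞, L^1) ≤ φ₀(A) · K(t·φ₁(A)/φ₀(A), x; E₀, E₁)`, where `K` denotes the
Peetre K-functional. -/
theorem K_functional_estimate_phi_lipschitz
    {Ω : Type*} [MeasurableSpace Ω] (μ : Measure Ω) [IsFiniteMeasure μ]
    {E₀ E₁ : Type*} [NormedAddCommGroup E₀] [NormedSpace ℝ E₀]
    [NormedAddCommGroup E₁] [NormedSpace ℝ E₁]
    (j : E₀ →L[ℝ] E₁) (hj : Function.Injective j)
    (φ₀ φ₁ : Set Ω → ℝ)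
    (hφ₀_pos : ∀ A : Set Ω, MeasurableSet A → 0 < φ₀ A)
    (hφ₁_pos : ∀ A : Set Ω, MeasurableSet A → 0 < φ₁ A)
    (T : E₁ → Lp ℝ 1 μ)
    (ha_mem : ∀ x₀ : E₀, MemLp (⇑(T (j x₀))) ∞ μ)
    (ha : ∀ x₀ : E₀, ∀ A : Set Ω, MeasurableSet A →
      eLpNorm (⇑(T (j x₀))) ∞ (μ.restrict A) ≤ ENNReal.ofReal (φ₀ A * ‖x₀‖))
    (hb : ∀ x y : E₁, ∀ A : Set Ω, MeasurableSet A →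
      eLpNorm (fun ω => T x ω - T y ω) 1 (μ.restrict A) ≤
        ENNReal.ofReal (φ₁ A * ‖x - y‖)) :
    ∀ x : E₁, ∀ A : Set Ω, MeasurableSet A → ∀ t : ℝ, 0 < t →
      sInf {r : ℝ | ∃ g₀ g₁ : Ω → ℝ, MemLp g₀ ∞ μ ∧ MemLp g₁ 1 μ ∧
          (A.indicator (⇑(T x)) =ᵐ[μ] fun ω => g₀ ω + g₁ ω) ∧
          r = (eLpNorm g₀ ∞ μ).toReal + t * (eLpNorm g₁ 1 μ).toReal} ≤
        φ₀ A * sInf {r : ℝ | ∃ (x₀ : E₀) (x₁ : E₁), x = j x₀ + x₁ ∧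
          r = ‖x₀‖ + (t * (φ₁ A / φ₀ A)) * ‖x₁‖} := by
  intro x A hA t ht
  have hc : 0 < φ₀ A := hφ₀_pos A hA
  set L : Set ℝ := {r : ℝ | ∃ g₀ g₁ : Ω → ℝ, MemLp g₀ ∞ μ ∧ MemLp g₁ 1 μ ∧
      (A.indicator (⇑(T x)) =ᵐ[μ] fun ω => g₀ ω + g₁ ω) ∧
      r = (eLpNorm g₀ ∞ μ).toReal + t * (eLpNorm g₁ 1 μ).toReal} with hL
  set R : Set ℝ := {r : ℝ | ∃ (x₀ : E₀) (x₁ : E₁), x = j x₀ + x₁ ∧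
      r = ‖x₀‖ + (t * (φ₁ A / φ₀ A)) * ‖x₁‖} with hR
  have hLbdd : BddBelow L := by
    refine ⟨0, fun r hr => ?_⟩
    obtain ⟨g₀, g₁, _, _, _, rfl⟩ := hr
    positivity
  have hRne : R.Nonempty := by
    refine ⟨‖(0 : E₀)‖ + (t * (φ₁ A / φ₀ A)) * ‖x‖, 0, x, by simp, rfl⟩
  have key : ∀ r ∈ R, sInf L ≤ φ₀ A * r := by
    rintro r ⟨x₀, x₁, hx, rfl⟩
    set g₀ : Ω → ℝ := A.indicator (⇑(T (j x₀))) with hg₀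
    set g₁ : Ω → ℝ := A.indicator (fun ω => T x ω - T (j x₀) ω) with hg₁
    have hmem₀ : MemLp g₀ ∞ μ := (ha_mem x₀).indicator hA
    have hmem₁ : MemLp g₁ 1 μ :=
      (((Lp.memLp (T x)).sub (Lp.memLp (T (j x₀))))).indicator hA
    have hsum : A.indicator (⇑(T x)) =ᵐ[μ] fun ω => g₀ ω + g₁ ω := by
      refine Filter.EventuallyEq.of_eq (funext fun ω => ?_)
      by_cases hω : ω ∈ A <;>
        simp [hg₀, hg₁, Set.indicator_of_mem, Set.indicator_of_notMem, hω]
    have hn₀ : (eLpNorm g₀ ∞ μ).toReal ≤ φ₀ A * ‖x₀‖ := by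
      rw [hg₀, eLpNorm_indicator_eq_eLpNorm_restrict hA]
      refine ENNReal.toReal_le_of_le_ofReal (by positivity) (ha x₀ A hA)
    have hn₁ : (eLpNorm g₁ 1 μ).toReal ≤ φ₁ A * ‖x₁‖ := by
      rw [hg₁, eLpNorm_indicator_eq_eLpNorm_restrict hA]
      have := hb x (j x₀) A hA
      have hx' : x - j x₀ = x₁ := by rw [hx]; abel
      rw [hx'] at this
      exact ENNReal.toReal_le_of_le_ofReal
        (by have := (hφ₁_pos A hA).le; positivity) this
    have hmemL : (eLpNorm g₀ ∞ μ).toReal + t * (eLpNorm g₁ 1 μ).toReal ∈ L :=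
      ⟨g₀, g₁, hmem₀, hmem₁, hsum, rfl⟩
    refine (csInf_le hLbdd hmemL).trans ?_
    have heq : φ₀ A * (‖x₀‖ + t * (φ₁ A / φ₀ A) * ‖x₁‖)
        = φ₀ A * ‖x₀‖ + t * (φ₁ A * ‖x₁‖) := by
      field_simp
    rw [heq]
    have := mul_le_mul_of_nonneg_left hn₁ ht.le
    linarith
  have hdiv : sInf L / φ₀ A ≤ sInf R :=
    le_csInf hRne fun r hr => (div_le_iff₀' hc).mpr (key r hr)
  calc sInf L = φ₀ A * (sInf L / φ₀ A) := by field_simp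
    _ ≤ φ₀ A * sInf R := by
        exact mul_le_mul_of_nonneg_left hdiv hc.le
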